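/- BIC asymptotic equivalence: under the assumptions that RSS_ℓ/RSS₀ and RSS_k/RSS₀ converge to positive constants c_ℓ, c_k as n → ∞ with c_ℓ, c_k ∈ (0,1], the difference −2 log BF_{ℓk}^{J-PEP} − [ n log(RSS_ℓ/RSS_k) + (d_ℓ − d_k) log n ] stays bounded as n → ∞, where BF_{ℓk}^{J-PEP} = BF_{ℓ0}^{J-PEP}/BF_{k0}^{J-PEP} and BF_{ℓ0}^{J-PEP} is given by the integral formula 2[Γ(n−d_ℓ)/Γ((n−d_ℓ)/2)²]∫₀^{π/2}(sinφ)^{n−d₀−1}(cosφ)^{n−d_ℓ−1}(n+sin²φ)^{(n−d_ℓ)/2}(n RSS_ℓ/RSS₀ + sin²φ)^{−(n−d₀)/2} dφ. -/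

import Mathlib

open Real Filter MeasureTheory

lemma cont_rpow_const {p : ℝ} (hp : 0 ≤ p) : Continuous fun x : ℝ => x ^ p := by
  exact continuous_iff_continuousAt.mpr fun x =>
    Real.continuousAt_rpow_const x p (Or.inr hp)

lemma one_add_rpow_le_exp {u p : ℝ} (hu : 0 ≤ u) (hp : 0 ≤ p) :
    (1 + u) ^ p ≤ Real.exp (p * u) := by
  have h1 : (0:ℝ) < 1 + u := by linarith
  rw [Real.rpow_def_of_pos h1]
  apply Real.exp_le_exp.mpr
  have hlog : Real.log (1 + u) ≤ u := by
    have := Real.log_le_sub_one_of_pos h1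
    linarith
  have hln : 0 ≤ Real.log (1 + u) := Real.log_nonneg (by linarith)
  nlinarith

lemma Gamma_add_half_le {x : ℝ} (hx : 0 < x) :
    Real.Gamma (x + 1/2) ≤ Real.Gamma x * Real.sqrt x := by
  have h := Real.Gamma_mul_add_mul_le_rpow_Gamma_mul_rpow_Gamma hx
    (by linarith : (0:ℝ) < x + 1) (by norm_num : (0:ℝ) < (1/2:ℝ))
    (by norm_num : (0:ℝ) < (1/2:ℝ)) (by norm_num)
  have he : (1/2 : ℝ) * x + (1/2 : ℝ) * (x+1) = x + 1/2 := by ring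
  rw [he, Real.Gamma_add_one hx.ne'] at h
  have hΓ : 0 ≤ Real.Gamma x := (Real.Gamma_pos_of_pos hx).le
  calc Real.Gamma (x + 1/2) ≤ Real.Gamma x ^ (1/2:ℝ) * (x * Real.Gamma x) ^ (1/2:ℝ) := h
    _ = Real.Gamma x * Real.sqrt x := by
        rw [← Real.mul_rpow hΓ (by positivity), ← Real.sqrt_eq_rpow,
          show Real.Gamma x * (x * Real.Gamma x) = x * Real.Gamma x ^ 2 by ring,
          Real.sqrt_mul hx.le, Real.sqrt_sq hΓ]
        ring

lemma le_Gamma_add_half {x : ℝ} (hx : 1 ≤ x) :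
    Real.Gamma x * Real.sqrt (x/2) ≤ Real.Gamma (x + 1/2) := by
  have hx0 : (0:ℝ) < x := by linarith
  have h2 : (0:ℝ) < x + 1/2 := by linarith
  have h := Gamma_add_half_le h2
  rw [show x + 1/2 + 1/2 = x + 1 by ring, Real.Gamma_add_one hx0.ne'] at h
  -- x * Γ x ≤ Γ (x+1/2) * √(x+1/2)
  have hs : Real.sqrt (x/2) * Real.sqrt (x + 1/2) ≤ x := by
    rw [← Real.sqrt_mul (by positivity)]
    calc Real.sqrt (x/2 * (x + 1/2)) ≤ Real.sqrt (x^2) := by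
          apply Real.sqrt_le_sqrt; nlinarith
      _ = x := by rw [Real.sqrt_sq hx0.le]
  have hΓp : 0 < Real.Gamma (x + 1/2) := Real.Gamma_pos_of_pos h2
  have hΓ : 0 < Real.Gamma x := Real.Gamma_pos_of_pos hx0
  nlinarith [Real.sqrt_nonneg (x/2), Real.sqrt_nonneg (x + 1/2),
    Real.sqrt_pos.mpr (show (0:ℝ) < x + 1/2 by linarith)]

lemma gamma_ratio_nat (m : ℕ) : ∃ C : ℝ, 1 ≤ C ∧ ∀ y : ℝ, 1 ≤ y →
    Real.Gamma (y + m) ≤ C * (Real.Gamma y * y ^ (m:ℝ)) ∧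
    Real.Gamma y * y ^ (m:ℝ) ≤ C * Real.Gamma (y + m) := by
  induction m with
  | zero =>
    exact ⟨1, le_refl _, fun y hy => by simp⟩
  | succ m ih =>
    obtain ⟨C, hC1, hC⟩ := ih
    refine ⟨C * (m + 1), by nlinarith [(Nat.cast_nonneg m : (0:ℝ) ≤ m)], fun y hy => ?_⟩
    have hy0 : (0:ℝ) < y := by linarith
    have hym : (0:ℝ) < y + m := by positivity
    have hrec : Real.Gamma (y + (m+1:ℕ)) = (y + m) * Real.Gamma (y + m) := by
      rw [show (y + (m+1:ℕ) : ℝ) = (y + m) + 1 by push_cast; ring,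
        Real.Gamma_add_one hym.ne']
    have hpow : y ^ ((m+1:ℕ):ℝ) = y ^ (m:ℝ) * y := by
      rw [show ((m+1:ℕ):ℝ) = (m:ℝ) + 1 by push_cast; ring,
        Real.rpow_add_one hy0.ne']
    obtain ⟨h1, h2⟩ := hC y hy
    have hym_le : y + m ≤ (m+1) * y := by nlinarith [(Nat.cast_nonneg m : (0:ℝ) ≤ m)]
    have hΓym : 0 < Real.Gamma (y + m) := Real.Gamma_pos_of_pos hym
    have hΓy : 0 < Real.Gamma y := Real.Gamma_pos_of_pos hy0
    have hyp : (0:ℝ) < y ^ (m:ℝ) := Real.rpow_pos_of_pos hy0 _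
    constructor
    · rw [hrec, hpow]
      calc (y + m) * Real.Gamma (y + m) ≤ ((m+1) * y) * (C * (Real.Gamma y * y ^ (m:ℝ))) := by
            apply mul_le_mul hym_le h1 hΓym.le (by positivity)
        _ = C * (m + 1) * (Real.Gamma y * (y ^ (m:ℝ) * y)) := by ring
    · rw [hrec, hpow]
      calc Real.Gamma y * (y ^ (m:ℝ) * y)
          = y * (Real.Gamma y * y ^ (m:ℝ)) := by ring
        _ ≤ y * (C * Real.Gamma (y + m)) := by
            apply mul_le_mul_of_nonneg_left h2 hy0.le
        _ ≤ C * (m+1) * ((y + m) * Real.Gamma (y + m)) := by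
            have hy' : y ≤ (m+1) * (y + m) := by
              nlinarith [(Nat.cast_nonneg m : (0:ℝ) ≤ m)]
            calc y * (C * Real.Gamma (y + m))
                ≤ ((m+1) * (y + m)) * (C * Real.Gamma (y + m)) :=
                  mul_le_mul_of_nonneg_right hy' (by positivity)
              _ = C * (m+1) * ((y + m) * Real.Gamma (y + m)) := by ring

lemma gamma_ratio_half (j : ℕ) : ∃ C : ℝ, 1 ≤ C ∧ ∀ y : ℝ, 1 ≤ y →
    Real.Gamma (y + (j:ℝ)/2) ≤ C * (Real.Gamma y * y ^ ((j:ℝ)/2)) ∧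
    Real.Gamma y * y ^ ((j:ℝ)/2) ≤ C * Real.Gamma (y + (j:ℝ)/2) := by
  rcases Nat.even_or_odd j with ⟨m, hm⟩ | ⟨m, hm⟩
  · obtain ⟨C, hC1, hC⟩ := gamma_ratio_nat m
    refine ⟨C, hC1, fun y hy => ?_⟩
    have : ((j:ℝ))/2 = (m:ℝ) := by subst hm; push_cast; ring
    rw [this]; exact hC y hy
  · obtain ⟨C, hC1, hC⟩ := gamma_ratio_nat m
    have h32 : (1:ℝ) ≤ (3/2:ℝ) ^ (m:ℝ) :=
      Real.one_le_rpow (by norm_num) (by positivity)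
    refine ⟨2 * C * (3/2:ℝ) ^ (m:ℝ), by nlinarith, fun y hy => ?_⟩
    have hy0 : (0:ℝ) < y := by linarith
    have hy2 : (1:ℝ) ≤ y + 1/2 := by linarith
    have hy20 : (0:ℝ) < y + 1/2 := by linarith
    have hΓy : 0 < Real.Gamma y := Real.Gamma_pos_of_pos hy0
    have hΓy2 : 0 < Real.Gamma (y + 1/2) := Real.Gamma_pos_of_pos hy20
    have hje : ((j:ℝ))/2 = (m:ℝ) + 1/2 := by subst hm; push_cast; ring
    have harg : y + (j:ℝ)/2 = (y + 1/2) + (m:ℝ) := by rw [hje]; ring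
    have hpowsplit : y ^ ((j:ℝ)/2) = y ^ ((m:ℝ)) * y ^ ((1:ℝ)/2) := by
      rw [hje, Real.rpow_add hy0]
    have hsqrt : y ^ ((1:ℝ)/2) = Real.sqrt y := (Real.sqrt_eq_rpow y).symm
    obtain ⟨h1, h2⟩ := hC (y + 1/2) hy2
    have hΓhalf_ub : Real.Gamma (y + 1/2) ≤ Real.Gamma y * Real.sqrt y :=
      Gamma_add_half_le hy0
    have hΓhalf_lb : Real.Gamma y * Real.sqrt (y/2) ≤ Real.Gamma (y + 1/2) :=
      le_Gamma_add_half hy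
    have hybd : (y + 1/2) ^ ((m:ℝ)) ≤ (3/2:ℝ) ^ (m:ℝ) * y ^ ((m:ℝ)) := by
      rw [← Real.mul_rpow (by norm_num) hy0.le]
      exact Real.rpow_le_rpow hy20.le (by linarith) (by positivity)
    have hybd' : y ^ ((m:ℝ)) ≤ (y + 1/2) ^ ((m:ℝ)) :=
      Real.rpow_le_rpow hy0.le (by linarith) (by positivity)
    have hsy : (0:ℝ) < Real.sqrt y := Real.sqrt_pos.mpr hy0
    have hpm : (0:ℝ) < y ^ ((m:ℝ)) := Real.rpow_pos_of_pos hy0 _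
    have hpm2 : (0:ℝ) < (y + 1/2) ^ ((m:ℝ)) := Real.rpow_pos_of_pos hy20 _
    constructor
    · rw [harg, hpowsplit, hsqrt]
      calc Real.Gamma ((y + 1/2) + (m:ℝ))
          ≤ C * (Real.Gamma (y + 1/2) * (y + 1/2) ^ ((m:ℝ))) := h1
        _ ≤ C * ((Real.Gamma y * Real.sqrt y) * ((3/2:ℝ) ^ (m:ℝ) * y ^ ((m:ℝ)))) := by
            apply mul_le_mul_of_nonneg_left _ (by linarith)
            exact mul_le_mul hΓhalf_ub hybd hpm2.le (by positivity)
        _ ≤ 2 * C * (3/2:ℝ) ^ (m:ℝ) * (Real.Gamma y * (y ^ ((m:ℝ)) * Real.sqrt y)) := by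
            nlinarith [mul_nonneg (mul_nonneg (by linarith : (0:ℝ) ≤ C)
              (by positivity : (0:ℝ) ≤ (3/2:ℝ) ^ (m:ℝ)))
              (by positivity : (0:ℝ) ≤ Real.Gamma y * (y ^ ((m:ℝ)) * Real.sqrt y))]
    · rw [harg, hpowsplit, hsqrt]
      have hs2 : Real.sqrt 2 * Real.sqrt (y/2) = Real.sqrt y := by
        rw [← Real.sqrt_mul (by norm_num : (0:ℝ) ≤ 2) (y/2)]; congr 1; ring
      have hsy2 : (0:ℝ) ≤ Real.sqrt (y/2) := Real.sqrt_nonneg _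
      have hkey : (Real.Gamma y * Real.sqrt (y/2)) * y ^ ((m:ℝ))
          ≤ C * Real.Gamma ((y + 1/2) + (m:ℝ)) := by
        calc (Real.Gamma y * Real.sqrt (y/2)) * y ^ ((m:ℝ))
            ≤ Real.Gamma (y + 1/2) * (y + 1/2) ^ ((m:ℝ)) :=
              mul_le_mul hΓhalf_lb hybd' hpm.le hΓy2.le
          _ ≤ C * Real.Gamma ((y + 1/2) + (m:ℝ)) := h2
      have hsqrt2_le : Real.sqrt 2 ≤ 2 := by
        nlinarith [Real.sq_sqrt (by norm_num : (0:ℝ) ≤ 2), Real.sqrt_nonneg 2]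
      have hΓa : 0 < Real.Gamma ((y + 1/2) + (m:ℝ)) :=
        Real.Gamma_pos_of_pos (by positivity)
      calc Real.Gamma y * (y ^ ((m:ℝ)) * Real.sqrt y)
          = Real.sqrt 2 * ((Real.Gamma y * Real.sqrt (y/2)) * y ^ ((m:ℝ))) := by
            rw [← hs2]; ring
        _ ≤ Real.sqrt 2 * (C * Real.Gamma ((y + 1/2) + (m:ℝ))) :=
            mul_le_mul_of_nonneg_left hkey (Real.sqrt_nonneg 2)
        _ ≤ 2 * C * (3/2:ℝ) ^ (m:ℝ) * Real.Gamma ((y + 1/2) + (m:ℝ)) := by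
            nlinarith [Real.sqrt_nonneg (2:ℝ), mul_pos (show (0:ℝ) < C by linarith) hΓa]

lemma log_gamma_diff_core (β : ℝ) (hβ : 0 < β) (γ₁ : ℝ) (j : ℕ) :
    ∃ M : ℝ, ∀ᶠ n : ℕ in atTop,
      |Real.log (Real.Gamma (β * n - γ₁)) - Real.log (Real.Gamma (β * n - (γ₁ - (j:ℝ)/2)))
        + ((j:ℝ)/2) * Real.log n| ≤ M := by
  obtain ⟨C, hC1, hC⟩ := gamma_ratio_half j
  set δ : ℝ := (j:ℝ)/2 with hδdef
  have hδ0 : 0 ≤ δ := by positivity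
  refine ⟨Real.log C + δ * (|Real.log β| + 1), ?_⟩
  have hyt : Tendsto (fun n : ℕ => β * n - γ₁) atTop atTop := by
    apply tendsto_atTop_add_const_right
    exact Tendsto.const_mul_atTop hβ tendsto_natCast_atTop_atTop
  have E1 : ∀ᶠ n : ℕ in atTop, 1 ≤ β * n - γ₁ := hyt.eventually_ge_atTop 1
  have E2 : ∀ᶠ n : ℕ in atTop, (1:ℝ) ≤ n := by
    filter_upwards [eventually_ge_atTop 1] with n hn
    exact_mod_cast hn
  have hratio : Tendsto (fun n : ℕ => (β * n - γ₁) / n) atTop (nhds β) := by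
    have h1 : Tendsto (fun n : ℕ => β - γ₁ / n) atTop (nhds β) := by
      have := tendsto_const_div_atTop_nhds_zero_nat γ₁
      simpa using (tendsto_const_nhds (x := β)).sub this
    apply h1.congr'
    filter_upwards [eventually_ge_atTop 1] with n hn
    have hn0 : (n:ℝ) ≠ 0 := by positivity
    field_simp
  have E3 : ∀ᶠ n : ℕ in atTop, |Real.log ((β * n - γ₁) / n)| ≤ |Real.log β| + 1 := by
    have hlt : Tendsto (fun n : ℕ => Real.log ((β * n - γ₁) / n)) atTop
        (nhds (Real.log β)) := hratio.log hβ.ne'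
    have h1 := (Metric.tendsto_nhds.mp hlt) 1 one_pos
    filter_upwards [h1] with n hn
    rw [Real.dist_eq] at hn
    have := abs_sub_abs_le_abs_sub (Real.log ((β * n - γ₁) / n)) (Real.log β)
    linarith
  filter_upwards [E1, E2, E3] with n hy hn hlog
  set y : ℝ := β * n - γ₁ with hydef
  have hy0 : (0:ℝ) < y := by linarith
  have hn0 : (0:ℝ) < n := by linarith
  have harg : β * n - (γ₁ - δ) = y + δ := by rw [hydef]; ring
  rw [harg]
  obtain ⟨h1, h2⟩ := hC y hy
  have hΓy : 0 < Real.Gamma y := Real.Gamma_pos_of_pos hy0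
  have hΓyd : 0 < Real.Gamma (y + δ) := Real.Gamma_pos_of_pos (by linarith)
  have hyp : 0 < y ^ δ := Real.rpow_pos_of_pos hy0 _
  have hCpos : (0:ℝ) < C := by linarith
  have hu1 : Real.log (Real.Gamma (y + δ)) ≤ Real.log C + (Real.log (Real.Gamma y) + δ * Real.log y) := by
    have := Real.log_le_log hΓyd h1
    rwa [Real.log_mul hCpos.ne' (by positivity), Real.log_mul hΓy.ne' hyp.ne',
      Real.log_rpow hy0] at this
  have hu2 : Real.log (Real.Gamma y) + δ * Real.log y ≤ Real.log C + Real.log (Real.Gamma (y + δ)) := by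
    have := Real.log_le_log (by positivity) h2
    rwa [Real.log_mul hΓy.ne' hyp.ne', Real.log_rpow hy0,
      Real.log_mul hCpos.ne' hΓyd.ne'] at this
  have hdiv : Real.log y - Real.log n = Real.log (y / n) :=
    (Real.log_div hy0.ne' hn0.ne').symm
  have hkey : |Real.log (Real.Gamma (y + δ)) - Real.log (Real.Gamma y) - δ * Real.log y| ≤ Real.log C := by
    rw [abs_le]; constructor <;> linarith
  have habs2 : |δ * (Real.log y - Real.log n)| ≤ δ * (|Real.log β| + 1) := by
    rw [abs_mul, abs_of_nonneg hδ0, hdiv]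
    exact mul_le_mul_of_nonneg_left hlog hδ0
  calc |Real.log (Real.Gamma y) - Real.log (Real.Gamma (y + δ)) + δ * Real.log n|
      = |-(Real.log (Real.Gamma (y + δ)) - Real.log (Real.Gamma y) - δ * Real.log y)
          - δ * (Real.log y - Real.log n)| := by ring_nf
    _ ≤ |Real.log (Real.Gamma (y + δ)) - Real.log (Real.Gamma y) - δ * Real.log y|
        + |δ * (Real.log y - Real.log n)| := by
          apply (abs_sub _ _).trans; rw [abs_neg]
    _ ≤ Real.log C + δ * (|Real.log β| + 1) := add_le_add hkey habs2

lemma log_gamma_diff_bounded (β : ℝ) (hβ : 0 < β) (γ₁ γ₂ : ℝ)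
    (hj : (∃ j : ℕ, γ₁ - γ₂ = (j:ℝ)/2) ∨ (∃ j : ℕ, γ₂ - γ₁ = (j:ℝ)/2)) :
    ∃ M : ℝ, ∀ᶠ n : ℕ in atTop,
      |Real.log (Real.Gamma (β * n - γ₁)) - Real.log (Real.Gamma (β * n - γ₂))
        - (γ₂ - γ₁) * Real.log n| ≤ M := by
  rcases hj with ⟨j, hj⟩ | ⟨j, hj⟩
  · obtain ⟨M, hM⟩ := log_gamma_diff_core β hβ γ₁ j
    refine ⟨M, ?_⟩
    filter_upwards [hM] with n h
    have e1 : γ₂ = γ₁ - (j:ℝ)/2 := by linarith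
    rw [e1]
    have : Real.log (Real.Gamma (β * n - γ₁)) - Real.log (Real.Gamma (β * n - (γ₁ - (j:ℝ)/2)))
        - (γ₁ - (j:ℝ)/2 - γ₁) * Real.log n
        = Real.log (Real.Gamma (β * n - γ₁)) - Real.log (Real.Gamma (β * n - (γ₁ - (j:ℝ)/2)))
        + ((j:ℝ)/2) * Real.log n := by ring
    rw [this]; exact h
  · obtain ⟨M, hM⟩ := log_gamma_diff_core β hβ γ₂ j
    refine ⟨M, ?_⟩
    filter_upwards [hM] with n h
    have e1 : γ₁ = γ₂ - (j:ℝ)/2 := by linarith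
    rw [e1]
    have : Real.log (Real.Gamma (β * n - (γ₂ - (j:ℝ)/2))) - Real.log (Real.Gamma (β * n - γ₂))
        - (γ₂ - (γ₂ - (j:ℝ)/2)) * Real.log n
        = -(Real.log (Real.Gamma (β * n - γ₂)) - Real.log (Real.Gamma (β * n - (γ₂ - (j:ℝ)/2)))
          + ((j:ℝ)/2) * Real.log n) := by ring
    rw [this, abs_neg]; exact h

lemma real_betaIntegral {a b : ℝ} (ha : 0 < a) (hb : 0 < b) :
    ∫ t in (0:ℝ)..1, t ^ (a-1) * (1-t) ^ (b-1) =
      Real.Gamma a * Real.Gamma b / Real.Gamma (a+b) := by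
  have h := Complex.Gamma_mul_Gamma_eq_betaIntegral (s := (a:ℂ)) (t := (b:ℂ))
    (by simpa using ha) (by simpa using hb)
  have hint : Complex.betaIntegral a b =
      ((∫ t in (0:ℝ)..1, t ^ (a-1) * (1-t) ^ (b-1) : ℝ) : ℂ) := by
    rw [Complex.betaIntegral, ← intervalIntegral.integral_ofReal]
    apply intervalIntegral.integral_congr
    intro x hx
    rw [Set.uIcc_of_le (by norm_num : (0:ℝ) ≤ 1)] at hx
    obtain ⟨hx0, hx1⟩ := hx
    simp only []
    show (x:ℂ) ^ ((a:ℂ) - 1) * (1 - (x:ℂ)) ^ ((b:ℂ) - 1) = ((x ^ (a-1) * (1-x) ^ (b-1) : ℝ) : ℂ)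
    rw [show ((a:ℂ) - 1) = ((a - 1 : ℝ) : ℂ) by push_cast; ring,
      show ((b:ℂ) - 1) = ((b - 1 : ℝ) : ℂ) by push_cast; ring,
      show (1 - (x:ℂ)) = ((1 - x : ℝ) : ℂ) by push_cast; ring,
      ← Complex.ofReal_cpow hx0, ← Complex.ofReal_cpow (by linarith : (0:ℝ) ≤ 1 - x)]
    push_cast
    ring
  rw [hint, ← Complex.ofReal_add, Complex.Gamma_ofReal, Complex.Gamma_ofReal,
    Complex.Gamma_ofReal, ← Complex.ofReal_mul, ← Complex.ofReal_mul] at h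
  have h' := Complex.ofReal_inj.mp h
  have hΓ : Real.Gamma (a+b) ≠ 0 := (Real.Gamma_pos_of_pos (by linarith)).ne'
  field_simp at h' ⊢
  linarith [h']

lemma integral_sin_cos_rpow {a b : ℝ} (ha : 1 ≤ a) (hb : 1 ≤ b) :
    ∫ φ in (0:ℝ)..(π/2), Real.sin φ ^ (2*a-1) * Real.cos φ ^ (2*b-1) =
      Real.Gamma a * Real.Gamma b / (2 * Real.Gamma (a+b)) := by
  set g : ℝ → ℝ := fun t => t ^ (a-1) * (1-t) ^ (b-1) with hgdef
  have hgc : Continuous g := by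
    apply Continuous.mul (cont_rpow_const (by linarith))
    exact (cont_rpow_const (by linarith)).comp (continuous_const.sub continuous_id)
  have hf : ∀ x ∈ Set.uIcc (0:ℝ) (π/2), HasDerivAt (fun φ => Real.sin φ ^ 2)
      (2 * Real.sin x * Real.cos x) x := by
    intro x _
    have := (Real.hasDerivAt_sin x).fun_pow 2
    simpa [mul_comm, mul_assoc] using this
  have hf' : ContinuousOn (fun x => 2 * Real.sin x * Real.cos x) (Set.uIcc (0:ℝ) (π/2)) :=
    (((continuous_const.mul Real.continuous_sin).mul Real.continuous_cos)).continuousOn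
  have key := intervalIntegral.integral_comp_smul_deriv hf hf' hgc
  rw [Real.sin_zero, Real.sin_pi_div_two] at key
  norm_num at key
  -- key : ∫ φ in 0..π/2, (2 sin cos) • g (sin²) = ∫ t in 0..1, g t
  have congr1 : ∫ φ in (0:ℝ)..(π/2), 2 * Real.sin φ * Real.cos φ * g (Real.sin φ ^ 2)
      = ∫ φ in (0:ℝ)..(π/2), 2 * (Real.sin φ ^ (2*a-1) * Real.cos φ ^ (2*b-1)) := by
    apply intervalIntegral.integral_congr
    intro φ hφ
    rw [Set.uIcc_of_le (by positivity : (0:ℝ) ≤ π/2)] at hφ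
    obtain ⟨hφ0, hφ1⟩ := hφ
    have hs : 0 ≤ Real.sin φ := Real.sin_nonneg_of_nonneg_of_le_pi hφ0
      (by linarith [Real.pi_pos])
    have hc : 0 ≤ Real.cos φ := Real.cos_nonneg_of_mem_Icc
      ⟨by linarith [Real.pi_pos], hφ1⟩
    have h1 : (1:ℝ) - Real.sin φ ^ 2 = Real.cos φ ^ 2 := by
      have := Real.sin_sq_add_cos_sq φ; linarith
    have hsin : Real.sin φ * (Real.sin φ ^ 2) ^ (a-1) = Real.sin φ ^ (2*a-1) := by
      rw [← Real.rpow_natCast (Real.sin φ) 2, ← Real.rpow_mul hs,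
        show ((2:ℕ):ℝ) * (a-1) = 2*a-2 by push_cast; ring,
        show (2*a-1 : ℝ) = 1 + (2*a-2) by ring,
        Real.rpow_add' hs (by nlinarith : (1:ℝ) + (2*a-2) ≠ 0), Real.rpow_one]
    have hcos : Real.cos φ * (Real.cos φ ^ 2) ^ (b-1) = Real.cos φ ^ (2*b-1) := by
      rw [← Real.rpow_natCast (Real.cos φ) 2, ← Real.rpow_mul hc,
        show ((2:ℕ):ℝ) * (b-1) = 2*b-2 by push_cast; ring,
        show (2*b-1 : ℝ) = 1 + (2*b-2) by ring,
        Real.rpow_add' hc (by nlinarith : (1:ℝ) + (2*b-2) ≠ 0), Real.rpow_one]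
    calc 2 * Real.sin φ * Real.cos φ * g (Real.sin φ ^ 2)
        = 2 * Real.sin φ * Real.cos φ *
            ((Real.sin φ ^ 2) ^ (a-1) * (Real.cos φ ^ 2) ^ (b-1)) := by
          rw [hgdef]; simp only []; rw [h1]
      _ = 2 * ((Real.sin φ * (Real.sin φ ^ 2) ^ (a-1)) *
            (Real.cos φ * (Real.cos φ ^ 2) ^ (b-1))) := by ring
      _ = 2 * (Real.sin φ ^ (2*a-1) * Real.cos φ ^ (2*b-1)) := by rw [hsin, hcos]
  rw [congr1] at key
  rw [intervalIntegral.integral_const_mul] at key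
  have hbeta := real_betaIntegral (by linarith : (0:ℝ) < a) (by linarith : (0:ℝ) < b)
  rw [hbeta] at key
  have hΓ : Real.Gamma (a+b) ≠ 0 := (Real.Gamma_pos_of_pos (by linarith)).ne'
  field_simp at key ⊢
  linarith

lemma sandwich_point {N ρ a b c s co : ℝ} (hN : 0 < N) (hρ0 : 0 < ρ)
    (hρc : c/2 < ρ) (hc0 : 0 < c)
    (ha0 : 0 < a) (hb0 : 0 < b) (han : a ≤ N/2) (hbn : b ≤ N/2)
    (hs : 0 ≤ s) (hs1 : s^2 ≤ 1) (hco : 0 ≤ co) :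
    Real.exp (-(1/c)) * (N^b * (N*ρ)^(-a)) * (s^(2*a-1)*co^(2*b-1))
      ≤ s^(2*a-1)*co^(2*b-1)*(N+s^2)^b*(N*ρ+s^2)^(-a)
    ∧ s^(2*a-1)*co^(2*b-1)*(N+s^2)^b*(N*ρ+s^2)^(-a)
      ≤ Real.exp (1/2) * (N^b * (N*ρ)^(-a)) * (s^(2*a-1)*co^(2*b-1)) := by
  have hNρ : 0 < N * ρ := by positivity
  have hs2 : 0 ≤ s^2 := sq_nonneg s
  have hf₀ : 0 ≤ s^(2*a-1)*co^(2*b-1) :=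
    mul_nonneg (Real.rpow_nonneg hs _) (Real.rpow_nonneg hco _)
  have hF1low : N ^ b ≤ (N + s^2) ^ b :=
    Real.rpow_le_rpow hN.le (by linarith) hb0.le
  have hF1high : (N + s^2) ^ b ≤ N ^ b * Real.exp (1/2) := by
    have hsplit : N + s^2 = N * (1 + s^2 / N) := by field_simp
    rw [hsplit, Real.mul_rpow hN.le (by positivity)]
    apply mul_le_mul_of_nonneg_left _ (Real.rpow_nonneg hN.le _)
    calc (1 + s^2 / N) ^ b ≤ Real.exp (b * (s^2 / N)) :=
          one_add_rpow_le_exp (by positivity) hb0.le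
      _ ≤ Real.exp (1/2) := by
          apply Real.exp_le_exp.mpr
          have h1 : b * (s^2 / N) ≤ (N/2) * (1/N) := by
            apply mul_le_mul hbn _ (by positivity) (by linarith)
            rw [div_le_div_iff₀ hN hN]
            nlinarith
          have h2 : (N/2) * (1/N) = 1/2 := by field_simp
          linarith
  have hF2high : (N*ρ + s^2) ^ (-a) ≤ (N*ρ) ^ (-a) :=
    Real.rpow_le_rpow_of_nonpos hNρ (by linarith) (by linarith)
  have hF2low : Real.exp (-(1/c)) * (N*ρ) ^ (-a) ≤ (N*ρ + s^2) ^ (-a) := by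
    have hsplit : N*ρ + s^2 = (N*ρ) * (1 + s^2 / (N*ρ)) := by field_simp
    rw [hsplit, Real.mul_rpow hNρ.le (by positivity), mul_comm (Real.exp (-(1/c)))]
    apply mul_le_mul_of_nonneg_left _ (Real.rpow_nonneg hNρ.le _)
    have hau : a * (s^2 / (N*ρ)) ≤ 1/c := by
      have h1 : a * (s^2 / (N*ρ)) ≤ (N/2) * (1/(N*ρ)) := by
        apply mul_le_mul han _ (by positivity) (by linarith)
        rw [div_le_div_iff₀ hNρ hNρ]
        nlinarith
      have h2 : (N/2) * (1/(N*ρ)) = 1/(2*ρ) := by field_simp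
      have h3 : 1/(2*ρ) ≤ 1/c := by
        rw [div_le_div_iff₀ (by linarith) hc0]
        linarith
      linarith
    have hup : (1 + s^2/(N*ρ)) ^ a ≤ Real.exp (1/c) :=
      le_trans (one_add_rpow_le_exp (by positivity) ha0.le) (Real.exp_le_exp.mpr hau)
    rw [Real.rpow_neg (by positivity), Real.exp_neg]
    exact inv_anti₀ (by positivity) hup
  constructor
  · have hmul : N^b * (Real.exp (-(1/c)) * (N*ρ)^(-a)) ≤ (N+s^2)^b * (N*ρ+s^2)^(-a) :=
      mul_le_mul hF1low hF2low (by positivity) (Real.rpow_nonneg (by positivity) _)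
    calc Real.exp (-(1/c)) * (N^b * (N*ρ)^(-a)) * (s^(2*a-1)*co^(2*b-1))
        = (s^(2*a-1)*co^(2*b-1)) * (N^b * (Real.exp (-(1/c)) * (N*ρ)^(-a))) := by ring
      _ ≤ (s^(2*a-1)*co^(2*b-1)) * ((N+s^2)^b * (N*ρ+s^2)^(-a)) :=
          mul_le_mul_of_nonneg_left hmul hf₀
      _ = s^(2*a-1)*co^(2*b-1)*(N+s^2)^b*(N*ρ+s^2)^(-a) := by ring
  · have hmul : (N+s^2)^b * (N*ρ+s^2)^(-a) ≤ (N^b * Real.exp (1/2)) * (N*ρ)^(-a) :=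
      mul_le_mul hF1high hF2high (Real.rpow_nonneg (by positivity) _) (by positivity)
    calc s^(2*a-1)*co^(2*b-1)*(N+s^2)^b*(N*ρ+s^2)^(-a)
        = (s^(2*a-1)*co^(2*b-1)) * ((N+s^2)^b * (N*ρ+s^2)^(-a)) := by ring
      _ ≤ (s^(2*a-1)*co^(2*b-1)) * ((N^b * Real.exp (1/2)) * (N*ρ)^(-a)) :=
          mul_le_mul_of_nonneg_left hmul hf₀
      _ = Real.exp (1/2) * (N^b * (N*ρ)^(-a)) * (s^(2*a-1)*co^(2*b-1)) := by ring

/-- The J-PEP Bayes factor of `M_ℓ` (dimension `dl`) versus the reference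
model `M₀` (dimension `d0`), equation (4.4) of the paper. -/
noncomputable def BFJPEP (d0 dl : ℕ) (n : ℕ) (RSSl RSS0 : ℝ) : ℝ :=
  2 * (Real.Gamma ((n : ℝ) - dl) / Real.Gamma (((n : ℝ) - dl) / 2) ^ 2) *
    ∫ φ in (0 : ℝ)..(π / 2),
      Real.sin φ ^ ((n : ℝ) - d0 - 1) * Real.cos φ ^ ((n : ℝ) - dl - 1) *
        ((n : ℝ) + Real.sin φ ^ 2) ^ (((n : ℝ) - dl) / 2) *
        ((n : ℝ) * (RSSl / RSS0) + Real.sin φ ^ 2) ^ (-((n : ℝ) - d0) / 2)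

set_option maxHeartbeats 1000000 in
lemma pm (d0 d : ℕ) (hd : d0 < d) (RSS RSS0 : ℕ → ℝ)
    (h0 : ∀ n, 0 < RSS0 n) (hp : ∀ n, 0 < RSS n) (hle : ∀ n, RSS n ≤ RSS0 n)
    (c : ℝ) (hc0 : 0 < c)
    (ht : Tendsto (fun n : ℕ => RSS n / RSS0 n) atTop (nhds c)) :
    ∀ᶠ n : ℕ in atTop,
      0 < BFJPEP d0 d n (RSS n) (RSS0 n) ∧
      |Real.log (BFJPEP d0 d n (RSS n) (RSS0 n))
        - (Real.log (Real.Gamma ((n:ℝ) - d) * Real.Gamma (((n:ℝ) - d0)/2) /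
             (Real.Gamma (((n:ℝ) - d)/2) * Real.Gamma (((n:ℝ) - d0)/2 + ((n:ℝ) - d)/2)))
           + ((((n:ℝ) - d)/2 - ((n:ℝ) - d0)/2)) * Real.log n
           - (((n:ℝ) - d0)/2) * Real.log (RSS n / RSS0 n))| ≤ 1/c + 1/2 := by
  have hρev : ∀ᶠ n : ℕ in atTop, c/2 < RSS n / RSS0 n := by
    have := (Metric.tendsto_nhds.mp ht) (c/2) (by positivity)
    filter_upwards [this] with n hn
    rw [Real.dist_eq, abs_lt] at hn
    linarith [hn.1]
  filter_upwards [eventually_ge_atTop (d + 2), hρev] with n hn2 hρhalf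
  have hNd : ((d:ℝ)) + 2 ≤ (n:ℝ) := by
    have : ((d+2:ℕ):ℝ) ≤ (n:ℝ) := Nat.cast_le.mpr hn2
    push_cast at this; linarith
  have hd0d : (d0:ℝ) + 1 ≤ (d:ℝ) := by exact_mod_cast hd
  have hN : (0:ℝ) < n := by linarith [(Nat.cast_nonneg d : (0:ℝ) ≤ d)]
  set ρ : ℝ := RSS n / RSS0 n with hρdef
  have hρ0 : 0 < ρ := div_pos (hp n) (h0 n)
  have hρ1 : ρ ≤ 1 := (div_le_one (h0 n)).mpr (hle n)
  have hρc : c/2 < ρ := hρhalf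
  set a : ℝ := ((n:ℝ) - d0)/2 with hadef
  set b : ℝ := ((n:ℝ) - d)/2 with hbdef
  have ha1 : 1 ≤ a := by rw [hadef]; linarith
  have hb1 : 1 ≤ b := by rw [hbdef]; linarith
  have ha0 : 0 < a := by linarith
  have hb0 : 0 < b := by linarith
  have hab0 : 0 < a + b := by linarith
  have h2b : 2 * b = (n:ℝ) - d := by rw [hbdef]; ring
  have hbn2 : b ≤ (n:ℝ)/2 := by rw [hbdef]; linarith [(Nat.cast_nonneg d : (0:ℝ) ≤ d)]
  have han2 : a ≤ (n:ℝ)/2 := by rw [hadef]; linarith [(Nat.cast_nonneg d0 : (0:ℝ) ≤ d0)]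
  -- rewrite the exponents in BFJPEP
  have e1 : (n:ℝ) - d0 - 1 = 2*a - 1 := by rw [hadef]; ring
  have e2 : (n:ℝ) - d - 1 = 2*b - 1 := by rw [hbdef]; ring
  have e3 : ((n:ℝ) - d)/2 = b := hbdef.symm
  have e4 : -((n:ℝ) - d0)/2 = -a := by rw [hadef]; ring
  set A : ℝ := Real.Gamma ((n:ℝ) - d) / Real.Gamma (((n:ℝ) - d)/2) ^ 2 with hAdef
  have hΓnd : 0 < Real.Gamma ((n:ℝ) - d) := Real.Gamma_pos_of_pos (by linarith)
  have hΓb : 0 < Real.Gamma (((n:ℝ) - d)/2) := Real.Gamma_pos_of_pos (by rw [e3]; linarith)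
  have hΓa : 0 < Real.Gamma a := Real.Gamma_pos_of_pos ha0
  have hΓab : 0 < Real.Gamma (a + b) := Real.Gamma_pos_of_pos hab0
  have hA : 0 < A := by rw [hAdef]; positivity
  set K : ℝ := (n:ℝ) ^ b * ((n:ℝ) * ρ) ^ (-a) with hKdef
  have hNρ : 0 < (n:ℝ) * ρ := by positivity
  have hK : 0 < K := by
    rw [hKdef]
    exact mul_pos (Real.rpow_pos_of_pos hN _) (Real.rpow_pos_of_pos hNρ _)
  set J : ℝ := ∫ φ in (0:ℝ)..(π/2), Real.sin φ ^ (2*a-1) * Real.cos φ ^ (2*b-1) with hJdef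
  have hJval : J = Real.Gamma a * Real.Gamma b / (2 * Real.Gamma (a + b)) := by
    rw [hJdef]; exact integral_sin_cos_rpow ha1 hb1
  have hΓb' : Real.Gamma b = Real.Gamma (((n:ℝ) - d)/2) := by rw [e3]
  have hJ : 0 < J := by rw [hJval, hΓb']; positivity
  -- the integrand and its sandwich
  set P : ℝ → ℝ := fun φ =>
    Real.sin φ ^ (2*a-1) * Real.cos φ ^ (2*b-1) *
      ((n:ℝ) + Real.sin φ ^ 2) ^ b *
      ((n:ℝ) * ρ + Real.sin φ ^ 2) ^ (-a) with hPdef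
  have hBF : BFJPEP d0 d n (RSS n) (RSS0 n) = 2 * A * ∫ φ in (0:ℝ)..(π/2), P φ := by
    rw [BFJPEP, e1, e2, e3, e4]
  set f₀ : ℝ → ℝ := fun φ => Real.sin φ ^ (2*a-1) * Real.cos φ ^ (2*b-1) with hf₀def
  have hpoint : ∀ φ ∈ Set.Icc (0:ℝ) (π/2),
      Real.exp (-(1/c)) * (((n:ℝ))^b * (((n:ℝ))*ρ)^(-a)) * f₀ φ ≤ P φ ∧
      P φ ≤ Real.exp (1/2) * (((n:ℝ))^b * (((n:ℝ))*ρ)^(-a)) * f₀ φ := by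
    intro φ hφ
    obtain ⟨hφ0, hφ1⟩ := hφ
    have hS : 0 ≤ Real.sin φ := Real.sin_nonneg_of_nonneg_of_le_pi hφ0
      (by linarith [Real.pi_pos])
    have hC : 0 ≤ Real.cos φ := Real.cos_nonneg_of_mem_Icc ⟨by linarith [Real.pi_pos], hφ1⟩
    have hs21 : Real.sin φ ^ 2 ≤ 1 := by
      nlinarith [Real.sin_le_one φ, Real.neg_one_le_sin φ]
    exact sandwich_point hN hρ0 hρc hc0 ha0 hb0 han2 hbn2 hS hs21 hC
  have h2a1 : (0:ℝ) ≤ 2*a-1 := by linarith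
  have h2b1 : (0:ℝ) ≤ 2*b-1 := by linarith
  have hcont0 : Continuous f₀ := by
    rw [hf₀def]
    exact (Real.continuous_sin.rpow_const (fun x => Or.inr h2a1)).mul
      (Real.continuous_cos.rpow_const (fun x => Or.inr h2b1))
  have hcontP : Continuous P := by
    rw [hPdef]
    refine ((((Real.continuous_sin.rpow_const (fun x => Or.inr h2a1)).mul
      (Real.continuous_cos.rpow_const (fun x => Or.inr h2b1))).mul
      ((continuous_const.add (Real.continuous_sin.pow 2)).rpow_const
        (fun x => Or.inr hb0.le))).mul
      ((continuous_const.add (Real.continuous_sin.pow 2)).rpow_const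
        (fun x => Or.inl ?_)))
    show (n:ℝ) * ρ + Real.sin x ^ 2 ≠ 0
    nlinarith [sq_nonneg (Real.sin x)]
  -- integral comparison
  have hIntP : IntervalIntegrable P MeasureTheory.volume 0 (π/2) :=
    hcontP.intervalIntegrable _ _
  have hIntlow : IntervalIntegrable
      (fun φ => Real.exp (-(1/c)) * (((n:ℝ))^b * (((n:ℝ))*ρ)^(-a)) * f₀ φ)
      MeasureTheory.volume 0 (π/2) := by
    exact (continuous_const.mul hcont0).intervalIntegrable _ _
  have hInthigh : IntervalIntegrable
      (fun φ => Real.exp (1/2) * (((n:ℝ))^b * (((n:ℝ))*ρ)^(-a)) * f₀ φ)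
      MeasureTheory.volume 0 (π/2) := by
    exact (continuous_const.mul hcont0).intervalIntegrable _ _
  have hπ : (0:ℝ) ≤ π/2 := by positivity
  have hlowI : Real.exp (-(1/c)) * (((n:ℝ))^b * (((n:ℝ))*ρ)^(-a)) * J
      ≤ ∫ φ in (0:ℝ)..(π/2), P φ := by
    have := intervalIntegral.integral_mono_on hπ hIntlow hIntP
      (fun φ hφ => (hpoint φ hφ).1)
    rw [intervalIntegral.integral_const_mul, ← hJdef] at this
    linarith
  have hhighI : (∫ φ in (0:ℝ)..(π/2), P φ)
      ≤ Real.exp (1/2) * (((n:ℝ))^b * (((n:ℝ))*ρ)^(-a)) * J := by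
    have := intervalIntegral.integral_mono_on hπ hIntP hInthigh
      (fun φ hφ => (hpoint φ hφ).2)
    rw [intervalIntegral.integral_const_mul, ← hJdef] at this
    linarith
  set X : ℝ := 2 * A * (K * J) with hXdef
  have hXpos : 0 < X := by rw [hXdef]; positivity
  have hBFlow : Real.exp (-(1/c)) * X ≤ BFJPEP d0 d n (RSS n) (RSS0 n) := by
    rw [hBF]
    calc Real.exp (-(1/c)) * X
        = 2 * A * (Real.exp (-(1/c)) * (((n:ℝ))^b * (((n:ℝ))*ρ)^(-a)) * J) := by
          rw [hXdef, hKdef]; ring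
      _ ≤ 2 * A * ∫ φ in (0:ℝ)..(π/2), P φ := by
          apply mul_le_mul_of_nonneg_left hlowI (by positivity)
  have hBFhigh : BFJPEP d0 d n (RSS n) (RSS0 n) ≤ Real.exp (1/2) * X := by
    rw [hBF]
    calc 2 * A * ∫ φ in (0:ℝ)..(π/2), P φ
        ≤ 2 * A * (Real.exp (1/2) * (((n:ℝ))^b * (((n:ℝ))*ρ)^(-a)) * J) := by
          apply mul_le_mul_of_nonneg_left hhighI (by positivity)
      _ = Real.exp (1/2) * X := by rw [hXdef, hKdef]; ring
  have hBFpos : 0 < BFJPEP d0 d n (RSS n) (RSS0 n) :=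
    lt_of_lt_of_le (by positivity) hBFlow
  refine ⟨hBFpos, ?_⟩
  -- logs
  have hlogup : Real.log (BFJPEP d0 d n (RSS n) (RSS0 n)) ≤ 1/2 + Real.log X := by
    have := Real.log_le_log hBFpos hBFhigh
    rwa [Real.log_mul (Real.exp_ne_zero _) hXpos.ne', Real.log_exp] at this
  have hlogdown : -(1/c) + Real.log X ≤ Real.log (BFJPEP d0 d n (RSS n) (RSS0 n)) := by
    have := Real.log_le_log (by positivity) hBFlow
    rwa [Real.log_mul (Real.exp_ne_zero _) hXpos.ne', Real.log_exp] at this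
  -- identify log X with the target expression
  have hΓbne : Real.Gamma (((n:ℝ) - d)/2) ≠ 0 := hΓb.ne'
  have hlogA : Real.log A = Real.log (Real.Gamma ((n:ℝ) - d))
      - 2 * Real.log (Real.Gamma (((n:ℝ) - d)/2)) := by
    rw [hAdef, Real.log_div hΓnd.ne' (pow_ne_zero _ hΓbne), Real.log_pow]
    push_cast; ring
  have hlogK : Real.log K = b * Real.log n - a * (Real.log n + Real.log ρ) := by
    rw [hKdef, Real.log_mul (Real.rpow_pos_of_pos hN _).ne' (Real.rpow_pos_of_pos hNρ _).ne',
      Real.log_rpow hN, Real.log_rpow hNρ, Real.log_mul hN.ne' hρ0.ne']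
    ring
  have hlogJ : Real.log J = Real.log (Real.Gamma a) + Real.log (Real.Gamma (((n:ℝ) - d)/2))
      - (Real.log 2 + Real.log (Real.Gamma (a + b))) := by
    rw [hJval, hΓb', Real.log_div (by positivity) (by positivity),
      Real.log_mul hΓa.ne' hΓb.ne', Real.log_mul two_ne_zero hΓab.ne']
  have hlogX : Real.log X = Real.log 2 + Real.log A + Real.log K + Real.log J := by
    rw [hXdef, Real.log_mul (by positivity) (by positivity),
      Real.log_mul (by norm_num) hA.ne', Real.log_mul hK.ne' hJ.ne']
    ring
  have hlogT : Real.log (Real.Gamma ((n:ℝ) - d) * Real.Gamma a /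
        (Real.Gamma (((n:ℝ) - d)/2) * Real.Gamma (a + b)))
      = Real.log (Real.Gamma ((n:ℝ) - d)) + Real.log (Real.Gamma a)
        - (Real.log (Real.Gamma (((n:ℝ) - d)/2)) + Real.log (Real.Gamma (a + b))) := by
    rw [Real.log_div (by positivity) (by positivity),
      Real.log_mul hΓnd.ne' hΓa.ne', Real.log_mul hΓbne hΓab.ne']
  have hfinal : Real.log X
      = Real.log (Real.Gamma ((n:ℝ) - d) * Real.Gamma a /
          (Real.Gamma (((n:ℝ) - d)/2) * Real.Gamma (a + b)))
        + (b - a) * Real.log n - a * Real.log ρ := by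
    rw [hlogX, hlogA, hlogK, hlogJ, hlogT]; ring
  rw [show (((n:ℝ) - d)/2 - a) = b - a by rw [hbdef]]
  rw [← hfinal]
  rw [abs_le]
  have h1c : 0 < 1/c := by positivity
  constructor <;> linarith

lemma habs_mul {c x M : ℝ} (h : |x| ≤ M) : |c * x| ≤ |c| * M := by
  rw [abs_mul]; exact mul_le_mul_of_nonneg_left h (abs_nonneg c)

lemma abs_add7 (a1 a2 a3 a4 a5 a6 a7 : ℝ) :
    |a1+a2+a3+a4+a5+a6+a7| ≤ |a1|+|a2|+|a3|+|a4|+|a5|+|a6|+|a7| := by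
  calc |a1+a2+a3+a4+a5+a6+a7| ≤ |a1+a2+a3+a4+a5+a6| + |a7| := abs_add_le _ _
    _ ≤ (|a1+a2+a3+a4+a5| + |a6|) + |a7| := by gcongr; exact abs_add_le _ _
    _ ≤ ((|a1+a2+a3+a4| + |a5|) + |a6|) + |a7| := by gcongr; exact abs_add_le _ _
    _ ≤ (((|a1+a2+a3| + |a4|) + |a5|) + |a6|) + |a7| := by gcongr; exact abs_add_le _ _
    _ ≤ ((((|a1+a2| + |a3|) + |a4|) + |a5|) + |a6|) + |a7| := by gcongr; exact abs_add_le _ _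
    _ ≤ (((((|a1| + |a2|) + |a3|) + |a4|) + |a5|) + |a6|) + |a7| := by gcongr; exact abs_add_le _ _
    _ = |a1|+|a2|+|a3|+|a4|+|a5|+|a6|+|a7| := by ring

lemma nat_half_diff (p q : ℕ) :
    (∃ j : ℕ, (p:ℝ)/2 - (q:ℝ)/2 = (j:ℝ)/2) ∨ (∃ j : ℕ, (q:ℝ)/2 - (p:ℝ)/2 = (j:ℝ)/2) := by
  rcases le_total q p with h | h
  · exact Or.inl ⟨p - q, by push_cast [Nat.cast_sub h]; ring⟩
  · exact Or.inr ⟨q - p, by push_cast [Nat.cast_sub h]; ring⟩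

lemma nat_diff (p q : ℕ) :
    (∃ j : ℕ, (p:ℝ) - (q:ℝ) = (j:ℝ)/2) ∨ (∃ j : ℕ, (q:ℝ) - (p:ℝ) = (j:ℝ)/2) := by
  rcases le_total q p with h | h
  · exact Or.inl ⟨2*(p - q), by push_cast [Nat.cast_sub h]; ring⟩
  · exact Or.inr ⟨2*(q - p), by push_cast [Nat.cast_sub h]; ring⟩

/-- Theorem 1 of the paper: the difference between
`−2 log BF_{ℓk}^{J-PEP}` and `BIC_ℓ − BIC_k = n log(RSS_ℓ/RSS_k) + (d_ℓ−d_k) log n`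
stays bounded as `n → ∞`. -/
theorem jpep_bic_equivalence (d0 dl dk : ℕ) (hd0l : d0 < dl) (hd0k : d0 < dk)
    (RSS0 RSSl RSSk : ℕ → ℝ)
    (h0 : ∀ n, 0 < RSS0 n) (hlpos : ∀ n, 0 < RSSl n) (hkpos : ∀ n, 0 < RSSk n)
    (hl0 : ∀ n, RSSl n ≤ RSS0 n) (hk0 : ∀ n, RSSk n ≤ RSS0 n)
    (cl ck : ℝ) (hcl : cl ∈ Set.Ioc (0 : ℝ) 1) (hck : ck ∈ Set.Ioc (0 : ℝ) 1)
    (htl : Tendsto (fun n : ℕ => RSSl n / RSS0 n) atTop (nhds cl))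
    (htk : Tendsto (fun n : ℕ => RSSk n / RSS0 n) atTop (nhds ck)) :
    ∃ M : ℝ, ∀ᶠ n : ℕ in atTop,
      |(-2) * Real.log (BFJPEP d0 dl n (RSSl n) (RSS0 n) /
            BFJPEP d0 dk n (RSSk n) (RSS0 n)) -
          ((n : ℝ) * Real.log (RSSl n / RSSk n) + ((dl : ℝ) - dk) * Real.log n)| ≤ M := by
  have hpml := pm d0 dl hd0l RSSl RSS0 h0 hlpos hl0 cl hcl.1 htl
  have hpmk := pm d0 dk hd0k RSSk RSS0 h0 hkpos hk0 ck hck.1 htk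
  obtain ⟨M1, hM1⟩ := log_gamma_diff_bounded 1 one_pos (dl:ℝ) (dk:ℝ) (nat_diff dl dk)
  obtain ⟨M2, hM2⟩ := log_gamma_diff_bounded (1/2) (by norm_num) ((dl:ℝ)/2) ((dk:ℝ)/2)
    (nat_half_diff dl dk)
  obtain ⟨M3, hM3⟩ := log_gamma_diff_bounded 1 one_pos (((d0:ℝ)+dl)/2) (((d0:ℝ)+dk)/2) (by
    rcases nat_half_diff (d0+dl) (d0+dk) with ⟨j, hj⟩ | ⟨j, hj⟩
    · exact Or.inl ⟨j, by push_cast at hj ⊢; linarith⟩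
    · exact Or.inr ⟨j, by push_cast at hj ⊢; linarith⟩)
  -- convergence of log RSSl/RSSk
  have hw : Tendsto (fun n : ℕ => Real.log (RSSl n / RSS0 n) - Real.log (RSSk n / RSS0 n))
      atTop (nhds (Real.log cl - Real.log ck)) :=
    (htl.log hcl.1.ne').sub (htk.log hck.1.ne')
  have hwev : ∀ᶠ n : ℕ in atTop,
      |Real.log (RSSl n / RSS0 n) - Real.log (RSSk n / RSS0 n)
        - (Real.log cl - Real.log ck)| ≤ 1 := by
    have := (Metric.tendsto_nhds.mp hw) 1 one_pos
    filter_upwards [this] with n hn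
    rw [Real.dist_eq] at hn; linarith
  refine ⟨2*(1/cl + 1/2) + 2*(1/ck + 1/2) + 2*M1 + 2*M2 + 2*M3
    + (d0:ℝ)*1 + (d0:ℝ)*|Real.log cl - Real.log ck|, ?_⟩
  filter_upwards [hpml, hpmk, hM1, hM2, hM3, hwev,
    eventually_ge_atTop (dl + 2), eventually_ge_atTop (dk + 2)] with n
    hl hk h1 h2 h3 hwn hnl hnk
  obtain ⟨hBFl, hul⟩ := hl
  obtain ⟨hBFk, huk⟩ := hk
  have hNl : ((dl:ℝ)) + 2 ≤ (n:ℝ) := by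
    have : ((dl+2:ℕ):ℝ) ≤ (n:ℝ) := Nat.cast_le.mpr hnl
    push_cast at this; linarith
  have hNk : ((dk:ℝ)) + 2 ≤ (n:ℝ) := by
    have : ((dk+2:ℕ):ℝ) ≤ (n:ℝ) := Nat.cast_le.mpr hnk
    push_cast at this; linarith
  have hd0l' : (d0:ℝ) + 1 ≤ (dl:ℝ) := by exact_mod_cast hd0l
  have hd0k' : (d0:ℝ) + 1 ≤ (dk:ℝ) := by exact_mod_cast hd0k
  -- Gamma positivity for splitting logs
  have hΓ1l : 0 < Real.Gamma ((n:ℝ) - dl) := Real.Gamma_pos_of_pos (by linarith)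
  have hΓ1k : 0 < Real.Gamma ((n:ℝ) - dk) := Real.Gamma_pos_of_pos (by linarith)
  have hΓa : 0 < Real.Gamma (((n:ℝ) - d0)/2) := Real.Gamma_pos_of_pos (by linarith)
  have hΓ2l : 0 < Real.Gamma (((n:ℝ) - dl)/2) := Real.Gamma_pos_of_pos (by linarith)
  have hΓ2k : 0 < Real.Gamma (((n:ℝ) - dk)/2) := Real.Gamma_pos_of_pos (by linarith)
  have hΓ3l : 0 < Real.Gamma (((n:ℝ) - d0)/2 + ((n:ℝ) - dl)/2) :=
    Real.Gamma_pos_of_pos (by linarith)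
  have hΓ3k : 0 < Real.Gamma (((n:ℝ) - d0)/2 + ((n:ℝ) - dk)/2) :=
    Real.Gamma_pos_of_pos (by linarith)
  -- split the G logs
  have hGl : Real.log (Real.Gamma ((n:ℝ) - dl) * Real.Gamma (((n:ℝ) - d0)/2) /
        (Real.Gamma (((n:ℝ) - dl)/2) * Real.Gamma (((n:ℝ) - d0)/2 + ((n:ℝ) - dl)/2)))
      = Real.log (Real.Gamma ((n:ℝ) - dl)) + Real.log (Real.Gamma (((n:ℝ) - d0)/2))
        - (Real.log (Real.Gamma (((n:ℝ) - dl)/2))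
          + Real.log (Real.Gamma (((n:ℝ) - d0)/2 + ((n:ℝ) - dl)/2))) := by
    rw [Real.log_div (by positivity) (by positivity),
      Real.log_mul hΓ1l.ne' hΓa.ne', Real.log_mul hΓ2l.ne' hΓ3l.ne']
  have hGk : Real.log (Real.Gamma ((n:ℝ) - dk) * Real.Gamma (((n:ℝ) - d0)/2) /
        (Real.Gamma (((n:ℝ) - dk)/2) * Real.Gamma (((n:ℝ) - d0)/2 + ((n:ℝ) - dk)/2)))
      = Real.log (Real.Gamma ((n:ℝ) - dk)) + Real.log (Real.Gamma (((n:ℝ) - d0)/2))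
        - (Real.log (Real.Gamma (((n:ℝ) - dk)/2))
          + Real.log (Real.Gamma (((n:ℝ) - d0)/2 + ((n:ℝ) - dk)/2))) := by
    rw [Real.log_div (by positivity) (by positivity),
      Real.log_mul hΓ1k.ne' hΓa.ne', Real.log_mul hΓ2k.ne' hΓ3k.ne']
  rw [hGl] at hul
  rw [hGk] at huk
  -- normalize the Gamma-arguments in h1 h2 h3
  rw [show (1:ℝ) * (n:ℝ) - (dl:ℝ) = (n:ℝ) - dl by ring,
    show (1:ℝ) * (n:ℝ) - (dk:ℝ) = (n:ℝ) - dk by ring] at h1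
  rw [show (1/2:ℝ) * (n:ℝ) - (dl:ℝ)/2 = ((n:ℝ) - dl)/2 by ring,
    show (1/2:ℝ) * (n:ℝ) - (dk:ℝ)/2 = ((n:ℝ) - dk)/2 by ring] at h2
  rw [show (1:ℝ) * (n:ℝ) - ((d0:ℝ)+dl)/2 = ((n:ℝ) - d0)/2 + ((n:ℝ) - dl)/2 by ring,
    show (1:ℝ) * (n:ℝ) - ((d0:ℝ)+dk)/2 = ((n:ℝ) - d0)/2 + ((n:ℝ) - dk)/2 by ring] at h3
  -- log of the RSS ratio
  have hQn : Real.log (RSSl n / RSSk n)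
      = Real.log (RSSl n / RSS0 n) - Real.log (RSSk n / RSS0 n) := by
    rw [Real.log_div (hlpos n).ne' (hkpos n).ne', Real.log_div (hlpos n).ne' (h0 n).ne',
      Real.log_div (hkpos n).ne' (h0 n).ne']
    ring
  -- the grand decomposition
  have hkey : (-2) * Real.log (BFJPEP d0 dl n (RSSl n) (RSS0 n) /
          BFJPEP d0 dk n (RSSk n) (RSS0 n)) -
        ((n : ℝ) * Real.log (RSSl n / RSSk n) + ((dl : ℝ) - dk) * Real.log n)
      = (-2) * (Real.log (BFJPEP d0 dl n (RSSl n) (RSS0 n))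
          - ((Real.log (Real.Gamma ((n:ℝ) - dl)) + Real.log (Real.Gamma (((n:ℝ) - d0)/2))
            - (Real.log (Real.Gamma (((n:ℝ) - dl)/2))
              + Real.log (Real.Gamma (((n:ℝ) - d0)/2 + ((n:ℝ) - dl)/2))))
            + ((((n:ℝ) - dl)/2 - ((n:ℝ) - d0)/2)) * Real.log n
            - (((n:ℝ) - d0)/2) * Real.log (RSSl n / RSS0 n)))
        + 2 * (Real.log (BFJPEP d0 dk n (RSSk n) (RSS0 n))
          - ((Real.log (Real.Gamma ((n:ℝ) - dk)) + Real.log (Real.Gamma (((n:ℝ) - d0)/2))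
            - (Real.log (Real.Gamma (((n:ℝ) - dk)/2))
              + Real.log (Real.Gamma (((n:ℝ) - d0)/2 + ((n:ℝ) - dk)/2))))
            + ((((n:ℝ) - dk)/2 - ((n:ℝ) - d0)/2)) * Real.log n
            - (((n:ℝ) - d0)/2) * Real.log (RSSk n / RSS0 n)))
        + (-2) * (Real.log (Real.Gamma ((n:ℝ) - dl)) - Real.log (Real.Gamma ((n:ℝ) - dk))
            - ((dk:ℝ) - (dl:ℝ)) * Real.log n)
        + 2 * (Real.log (Real.Gamma (((n:ℝ) - dl)/2)) - Real.log (Real.Gamma (((n:ℝ) - dk)/2))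
            - ((dk:ℝ)/2 - (dl:ℝ)/2) * Real.log n)
        + 2 * (Real.log (Real.Gamma (((n:ℝ) - d0)/2 + ((n:ℝ) - dl)/2))
            - Real.log (Real.Gamma (((n:ℝ) - d0)/2 + ((n:ℝ) - dk)/2))
            - (((d0:ℝ)+dk)/2 - ((d0:ℝ)+dl)/2) * Real.log n)
        + (-(d0:ℝ)) * (Real.log (RSSl n / RSS0 n) - Real.log (RSSk n / RSS0 n)
            - (Real.log cl - Real.log ck))
        + (-(d0:ℝ)) * (Real.log cl - Real.log ck) := by
    rw [Real.log_div hBFl.ne' hBFk.ne', hQn]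
    ring
  rw [hkey]
  have hd0nn : (0:ℝ) ≤ (d0:ℝ) := Nat.cast_nonneg d0
  have b1 := habs_mul (c := (-2:ℝ)) hul
  rw [show |(-2:ℝ)| = 2 by norm_num] at b1
  have b2 := habs_mul (c := (2:ℝ)) huk
  rw [show |(2:ℝ)| = 2 by norm_num] at b2
  have b3 := habs_mul (c := (-2:ℝ)) h1
  rw [show |(-2:ℝ)| = 2 by norm_num] at b3
  have b4 := habs_mul (c := (2:ℝ)) h2
  rw [show |(2:ℝ)| = 2 by norm_num] at b4
  have b5 := habs_mul (c := (2:ℝ)) h3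
  rw [show |(2:ℝ)| = 2 by norm_num] at b5
  have b6 := habs_mul (c := (-(d0:ℝ))) hwn
  rw [show |(-(d0:ℝ))| = (d0:ℝ) by rw [abs_neg, abs_of_nonneg hd0nn]] at b6
  have b7 := habs_mul (c := (-(d0:ℝ)))
    (le_refl |Real.log cl - Real.log ck|)
  rw [show |(-(d0:ℝ))| = (d0:ℝ) by rw [abs_neg, abs_of_nonneg hd0nn]] at b7
  exact le_trans (abs_add7 _ _ _ _ _ _ _) (by linarith)
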